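/- In the group G presented by ⟨a, b, c, r, s, t | (rs)², (st)³, (rt)⁶, (ab)², (bc)³, (ac)⁶, bc = st⟩, the subgroup generated by st has order exactly 3, and G is isomorphic to the amalgamated free product H ∗_C H where H is the (2,3,6)-triangle group ⟨r, s, t | (rs)², (st)³, (rt)⁶⟩ and C = ⟨st⟩ is cyclic of order 3. -/

import Mathlib

/-- Relators of the `(2,3,6)`-triangle group `⟨r, s, t | (rs)², (st)³, (rt)⁶⟩`,
with generators indexed by `Fin 3` as `r = 0`, `s = 1`, `t = 2`. -/
def triRels : Set (FreeGroup (Fin 3)) :=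
  {(FreeGroup.of 0 * FreeGroup.of 1) ^ 2,
   (FreeGroup.of 1 * FreeGroup.of 2) ^ 3,
   (FreeGroup.of 0 * FreeGroup.of 2) ^ 6}

/-- The `(2,3,6)`-triangle group. -/
def TriangleGroup236 : Type := PresentedGroup triRels

noncomputable instance : Group TriangleGroup236 :=
  inferInstanceAs (Group (PresentedGroup triRels))

/-- Relators of `G = ⟨a, b, c, r, s, t | (rs)², (st)³, (rt)⁶, (ab)², (bc)³, (ac)⁶,
bc = st⟩`, with generators indexed by `Fin 6` as
`a = 0, b = 1, c = 2, r = 3, s = 4, t = 5`. -/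
def doubleRels : Set (FreeGroup (Fin 6)) :=
  {(FreeGroup.of 3 * FreeGroup.of 4) ^ 2,
   (FreeGroup.of 4 * FreeGroup.of 5) ^ 3,
   (FreeGroup.of 3 * FreeGroup.of 5) ^ 6,
   (FreeGroup.of 0 * FreeGroup.of 1) ^ 2,
   (FreeGroup.of 1 * FreeGroup.of 2) ^ 3,
   (FreeGroup.of 0 * FreeGroup.of 2) ^ 6,
   (FreeGroup.of 1 * FreeGroup.of 2) * (FreeGroup.of 4 * FreeGroup.of 5)⁻¹}

/-- The doubled group `G = H ∗_C H`. -/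
def DoubleGroup : Type := PresentedGroup doubleRels

noncomputable instance : Group DoubleGroup :=
  inferInstanceAs (Group (PresentedGroup doubleRels))

/-- The element `st` of the `(2,3,6)`-triangle group. -/
noncomputable def stH : TriangleGroup236 :=
  (PresentedGroup.of (rels := triRels) 1) * (PresentedGroup.of (rels := triRels) 2)

/-- The element `st` of the doubled group. -/
noncomputable def stG : DoubleGroup :=
  (PresentedGroup.of (rels := doubleRels) 4) * (PresentedGroup.of (rels := doubleRels) 5)

namespace Stmt15Aux

open PresentedGroup Subgroup

lemma mk_rel' {α : Type*} {rels : Set (FreeGroup α)} {r : FreeGroup α} (h : r ∈ rels) :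
    PresentedGroup.mk rels r = 1 :=
  (QuotientGroup.eq_one_iff r).2 (Subgroup.subset_normalClosure h)

lemma mk_pow_rel {α : Type*} {rels : Set (FreeGroup α)} (x y : α) (n : ℕ)
    (h : (FreeGroup.of x * FreeGroup.of y) ^ n ∈ rels) :
    ((PresentedGroup.of x : PresentedGroup rels) * PresentedGroup.of y) ^ n = 1 := by
  have hmk : ((PresentedGroup.of x : PresentedGroup rels) * PresentedGroup.of y) ^ n
      = PresentedGroup.mk rels ((FreeGroup.of x * FreeGroup.of y) ^ n) := by
    rw [map_pow, map_mul]; rfl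
  rw [hmk, mk_rel' h]

/- memberships -/
lemma memT1 : (FreeGroup.of 0 * FreeGroup.of 1) ^ 2 ∈ triRels := Set.mem_insert _ _
lemma memT2 : (FreeGroup.of 1 * FreeGroup.of 2) ^ 3 ∈ triRels :=
  Set.mem_insert_of_mem _ (Set.mem_insert _ _)
lemma memT3 : (FreeGroup.of 0 * FreeGroup.of 2) ^ 6 ∈ triRels :=
  Set.mem_insert_of_mem _ (Set.mem_insert_of_mem _ rfl)

lemma memD1 : (FreeGroup.of 3 * FreeGroup.of 4) ^ 2 ∈ doubleRels := Set.mem_insert _ _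
lemma memD2 : (FreeGroup.of 4 * FreeGroup.of 5) ^ 3 ∈ doubleRels :=
  Set.mem_insert_of_mem _ (Set.mem_insert _ _)
lemma memD3 : (FreeGroup.of 3 * FreeGroup.of 5) ^ 6 ∈ doubleRels :=
  Set.mem_insert_of_mem _ (Set.mem_insert_of_mem _ (Set.mem_insert _ _))
lemma memD4 : (FreeGroup.of 0 * FreeGroup.of 1) ^ 2 ∈ doubleRels :=
  Set.mem_insert_of_mem _ (Set.mem_insert_of_mem _ (Set.mem_insert_of_mem _
    (Set.mem_insert _ _)))
lemma memD5 : (FreeGroup.of 1 * FreeGroup.of 2) ^ 3 ∈ doubleRels :=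
  Set.mem_insert_of_mem _ (Set.mem_insert_of_mem _ (Set.mem_insert_of_mem _
    (Set.mem_insert_of_mem _ (Set.mem_insert _ _))))
lemma memD6 : (FreeGroup.of 0 * FreeGroup.of 2) ^ 6 ∈ doubleRels :=
  Set.mem_insert_of_mem _ (Set.mem_insert_of_mem _ (Set.mem_insert_of_mem _
    (Set.mem_insert_of_mem _ (Set.mem_insert_of_mem _ (Set.mem_insert _ _)))))
lemma memD7 : (FreeGroup.of 1 * FreeGroup.of 2) * (FreeGroup.of 4 * FreeGroup.of 5)⁻¹
    ∈ doubleRels :=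
  Set.mem_insert_of_mem _ (Set.mem_insert_of_mem _ (Set.mem_insert_of_mem _
    (Set.mem_insert_of_mem _ (Set.mem_insert_of_mem _ (Set.mem_insert_of_mem _ rfl)))))

/-- `bc = st` in the doubled group. -/
lemma bc_eq_st :
    (PresentedGroup.of (rels := doubleRels) 1) * (PresentedGroup.of (rels := doubleRels) 2)
      = stG := by
  have h := mk_rel' memD7
  rw [map_mul, map_inv, map_mul, map_mul, mul_inv_eq_one] at h
  exact h

/- ### order of `st` is 3 : detect via a homomorphism to `Multiplicative (ZMod 6)` -/

abbrev M6 := Multiplicative (ZMod 6)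

def vH : Fin 3 → M6 := ![Multiplicative.ofAdd 3, 1, Multiplicative.ofAdd 2]

lemma relsH : ∀ r ∈ triRels, FreeGroup.lift vH r = 1 := by
  intro r hr
  rcases hr with rfl | rfl | rfl <;>
    simp only [map_pow, map_mul, FreeGroup.lift_apply_of, vH, Matrix.cons_val_zero,
      Matrix.cons_val_one, Matrix.head_cons, Matrix.cons_val_two, Matrix.tail_cons] <;>
    decide

noncomputable def φH : TriangleGroup236 →* M6 := PresentedGroup.toGroup relsH

def vG : Fin 6 → M6 :=
  ![Multiplicative.ofAdd 3, 1, Multiplicative.ofAdd 2,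
    Multiplicative.ofAdd 3, 1, Multiplicative.ofAdd 2]

lemma relsG : ∀ r ∈ doubleRels, FreeGroup.lift vG r = 1 := by
  intro r hr
  rcases hr with rfl | rfl | rfl | rfl | rfl | rfl | rfl <;>
    simp only [map_pow, map_mul, map_inv, FreeGroup.lift_apply_of, vG] <;>
    decide

noncomputable def φG : DoubleGroup →* M6 := PresentedGroup.toGroup relsG

lemma stH_cube : stH ^ 3 = 1 := mk_pow_rel 1 2 3 memT2
lemma stG_cube : stG ^ 3 = 1 := mk_pow_rel 4 5 3 memD2

lemma φH_stH : φH stH = Multiplicative.ofAdd 2 := by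
  have h1 : φH (PresentedGroup.of (rels := triRels) 1) = vH 1 := PresentedGroup.toGroup.of relsH
  have h2 : φH (PresentedGroup.of (rels := triRels) 2) = vH 2 := PresentedGroup.toGroup.of relsH
  rw [stH]; erw [map_mul, h1, h2]

lemma φG_stG : φG stG = Multiplicative.ofAdd 2 := by
  have h1 : φG (PresentedGroup.of (rels := doubleRels) 4) = vG 4 := PresentedGroup.toGroup.of relsG
  have h2 : φG (PresentedGroup.of (rels := doubleRels) 5) = vG 5 := PresentedGroup.toGroup.of relsG
  rw [stG]; erw [map_mul, h1, h2]

lemma stH_ne_one : stH ≠ 1 := by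
  intro h
  have := φH_stH
  rw [h, map_one] at this
  exact absurd this.symm (by decide)

lemma stG_ne_one : stG ≠ 1 := by
  intro h
  have := φG_stG
  rw [h, map_one] at this
  exact absurd this.symm (by decide)

lemma orderOf_stH : orderOf stH = 3 := by
  haveI : Fact (Nat.Prime 3) := ⟨by norm_num⟩
  exact orderOf_eq_prime stH_cube stH_ne_one

lemma orderOf_stG : orderOf stG = 3 := by
  haveI : Fact (Nat.Prime 3) := ⟨by norm_num⟩
  exact orderOf_eq_prime stG_cube stG_ne_one

/- ### the isomorphism -/

noncomputable abbrev P : Type _ :=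
  Monoid.PushoutI (fun _ : Bool => (Subgroup.zpowers stH).subtype)

/-- The first copy `H → G`, via `a, b, c`. -/
noncomputable def fstH : TriangleGroup236 →* DoubleGroup :=
  PresentedGroup.toGroup (f := fun i : Fin 3 =>
    (PresentedGroup.of (rels := doubleRels) (![0, 1, 2] i)))
    (by
      intro r hr
      rcases hr with rfl | rfl | rfl <;>
        simp only [map_pow, map_mul, FreeGroup.lift_apply_of, Matrix.cons_val_zero,
          Matrix.cons_val_one, Matrix.head_cons, Matrix.cons_val_two, Matrix.tail_cons]
      · exact mk_pow_rel 0 1 2 memD4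
      · exact mk_pow_rel 1 2 3 memD5
      · exact mk_pow_rel 0 2 6 memD6)

/-- The second copy `H → G`, via `r, s, t`. -/
noncomputable def sndH : TriangleGroup236 →* DoubleGroup :=
  PresentedGroup.toGroup (f := fun i : Fin 3 =>
    (PresentedGroup.of (rels := doubleRels) (![3, 4, 5] i)))
    (by
      intro r hr
      rcases hr with rfl | rfl | rfl <;>
        simp only [map_pow, map_mul, FreeGroup.lift_apply_of, Matrix.cons_val_zero,
          Matrix.cons_val_one, Matrix.head_cons, Matrix.cons_val_two, Matrix.tail_cons]
      · exact mk_pow_rel 3 4 2 memD1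
      · exact mk_pow_rel 4 5 3 memD2
      · exact mk_pow_rel 3 5 6 memD3)

lemma fstH_stH : fstH stH = stG := by
  rw [stH]; erw [map_mul]
  rw [show fstH (PresentedGroup.of (rels := triRels) 1)
      = PresentedGroup.of (rels := doubleRels) 1 from PresentedGroup.toGroup.of _,
    show fstH (PresentedGroup.of (rels := triRels) 2)
      = PresentedGroup.of (rels := doubleRels) 2 from PresentedGroup.toGroup.of _]
  exact bc_eq_st

lemma sndH_stH : sndH stH = stG := by
  rw [stH]; erw [map_mul]
  rw [show sndH (PresentedGroup.of (rels := triRels) 1)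
      = PresentedGroup.of (rels := doubleRels) 4 from PresentedGroup.toGroup.of _,
    show sndH (PresentedGroup.of (rels := triRels) 2)
      = PresentedGroup.of (rels := doubleRels) 5 from PresentedGroup.toGroup.of _]
  rfl

/-- The family of maps into `G`. -/
noncomputable def FF : ∀ _ : Bool, TriangleGroup236 →* DoubleGroup :=
  fun b => Bool.rec fstH sndH b

lemma FF_comp :
    ∀ i : Bool, (FF i).comp (Subgroup.zpowers stH).subtype
      = fstH.comp (Subgroup.zpowers stH).subtype := by
  intro i
  cases i
  · rfl
  · ext ⟨x, hx⟩
    obtain ⟨n, rfl⟩ := hx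
    simp only [MonoidHom.comp_apply, Subgroup.coe_subtype, FF]
    rw [map_zpow, map_zpow, sndH_stH, fstH_stH]

/-- Map from the pushout to `G`. -/
noncomputable def fromPush : P →* DoubleGroup :=
  Monoid.PushoutI.lift FF (fstH.comp (Subgroup.zpowers stH).subtype) FF_comp

/-- images of the six generators in the pushout -/
noncomputable def tv : Fin 6 → P :=
  ![Monoid.PushoutI.of (φ := fun _ : Bool => (Subgroup.zpowers stH).subtype) false
      (PresentedGroup.of 0),
    Monoid.PushoutI.of (φ := fun _ : Bool => (Subgroup.zpowers stH).subtype) false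
      (PresentedGroup.of 1),
    Monoid.PushoutI.of (φ := fun _ : Bool => (Subgroup.zpowers stH).subtype) false
      (PresentedGroup.of 2),
    Monoid.PushoutI.of (φ := fun _ : Bool => (Subgroup.zpowers stH).subtype) true
      (PresentedGroup.of 0),
    Monoid.PushoutI.of (φ := fun _ : Bool => (Subgroup.zpowers stH).subtype) true
      (PresentedGroup.of 1),
    Monoid.PushoutI.of (φ := fun _ : Bool => (Subgroup.zpowers stH).subtype) true
      (PresentedGroup.of 2)]

lemma tv0 : tv 0 = Monoid.PushoutI.of (φ := fun _ : Bool => (Subgroup.zpowers stH).subtype)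
    false (PresentedGroup.of 0) := rfl
lemma tv1 : tv 1 = Monoid.PushoutI.of (φ := fun _ : Bool => (Subgroup.zpowers stH).subtype)
    false (PresentedGroup.of 1) := rfl
lemma tv2 : tv 2 = Monoid.PushoutI.of (φ := fun _ : Bool => (Subgroup.zpowers stH).subtype)
    false (PresentedGroup.of 2) := rfl
lemma tv3 : tv 3 = Monoid.PushoutI.of (φ := fun _ : Bool => (Subgroup.zpowers stH).subtype)
    true (PresentedGroup.of 0) := rfl
lemma tv4 : tv 4 = Monoid.PushoutI.of (φ := fun _ : Bool => (Subgroup.zpowers stH).subtype)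
    true (PresentedGroup.of 1) := rfl
lemma tv5 : tv 5 = Monoid.PushoutI.of (φ := fun _ : Bool => (Subgroup.zpowers stH).subtype)
    true (PresentedGroup.of 2) := rfl

lemma of_pow_one (b : Bool) (x y : Fin 3) (n : ℕ)
    (h : ((PresentedGroup.of x : TriangleGroup236) * PresentedGroup.of y) ^ n = 1) :
    (Monoid.PushoutI.of (φ := fun _ : Bool => (Subgroup.zpowers stH).subtype) b
        (PresentedGroup.of x) *
      Monoid.PushoutI.of (φ := fun _ : Bool => (Subgroup.zpowers stH).subtype) b
        (PresentedGroup.of y)) ^ n = 1 := by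
  erw [← map_mul, ← map_pow, h, map_one]

lemma of_st_eq :
    Monoid.PushoutI.of (φ := fun _ : Bool => (Subgroup.zpowers stH).subtype) false
        (PresentedGroup.of 1) *
      Monoid.PushoutI.of (φ := fun _ : Bool => (Subgroup.zpowers stH).subtype) false
        (PresentedGroup.of 2)
    = Monoid.PushoutI.of (φ := fun _ : Bool => (Subgroup.zpowers stH).subtype) true
        (PresentedGroup.of 1) *
      Monoid.PushoutI.of (φ := fun _ : Bool => (Subgroup.zpowers stH).subtype) true
        (PresentedGroup.of 2) := by
  have h1 := Monoid.PushoutI.of_apply_eq_base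
    (φ := fun _ : Bool => (Subgroup.zpowers stH).subtype) false
    ⟨stH, Subgroup.mem_zpowers stH⟩
  have h2 := Monoid.PushoutI.of_apply_eq_base
    (φ := fun _ : Bool => (Subgroup.zpowers stH).subtype) true
    ⟨stH, Subgroup.mem_zpowers stH⟩
  have e : ((Subgroup.zpowers stH).subtype ⟨stH, Subgroup.mem_zpowers stH⟩ : TriangleGroup236)
      = PresentedGroup.of (rels := triRels) 1 * PresentedGroup.of (rels := triRels) 2 := rfl
  rw [e] at h1 h2
  exact ((map_mul _ _ _).symm.trans h1).trans (h2.symm.trans (map_mul _ _ _))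

/-- Map from `G` to the pushout. -/
noncomputable def toPush : DoubleGroup →* P :=
  PresentedGroup.toGroup (f := tv)
    (by
      intro r hr
      rcases hr with rfl | rfl | rfl | rfl | rfl | rfl | rfl <;>
        simp only [map_pow, map_mul, map_inv, FreeGroup.lift_apply_of, tv0, tv1, tv2, tv3, tv4, tv5]
      · exact of_pow_one true 0 1 2 (mk_pow_rel 0 1 2 memT1)
      · exact of_pow_one true 1 2 3 (mk_pow_rel 1 2 3 memT2)
      · exact of_pow_one true 0 2 6 (mk_pow_rel 0 2 6 memT3)
      · exact of_pow_one false 0 1 2 (mk_pow_rel 0 1 2 memT1)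
      · exact of_pow_one false 1 2 3 (mk_pow_rel 1 2 3 memT2)
      · exact of_pow_one false 0 2 6 (mk_pow_rel 0 2 6 memT3)
      · rw [mul_inv_eq_one]; exact of_st_eq)

lemma toPush_of (j : Fin 6) : toPush (PresentedGroup.of j) = tv j :=
  PresentedGroup.toGroup.of _

lemma fromPush_false (x : TriangleGroup236) :
    fromPush (Monoid.PushoutI.of (φ := fun _ : Bool => (Subgroup.zpowers stH).subtype)
      false x) = fstH x :=
  Monoid.PushoutI.lift_of _ _ _ _

lemma fromPush_true (x : TriangleGroup236) :
    fromPush (Monoid.PushoutI.of (φ := fun _ : Bool => (Subgroup.zpowers stH).subtype)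
      true x) = sndH x :=
  Monoid.PushoutI.lift_of _ _ _ _

lemma fstH_of (i : Fin 3) :
    fstH (PresentedGroup.of i) = PresentedGroup.of (rels := doubleRels) (![0, 1, 2] i) :=
  PresentedGroup.toGroup.of _

lemma sndH_of (i : Fin 3) :
    sndH (PresentedGroup.of i) = PresentedGroup.of (rels := doubleRels) (![3, 4, 5] i) :=
  PresentedGroup.toGroup.of _

end Stmt15Aux

open Stmt15Aux in
/-- in `G = ⟨a,b,c,r,s,t | (rs)², (st)³, (rt)⁶, (ab)², (bc)³, (ac)⁶,
bc = st⟩`, the subgroup `⟨st⟩` has order exactly `3`, and `G` is isomorphic to the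
amalgamated free product `H ∗_C H` where `H` is the `(2,3,6)`-triangle group and
`C = ⟨st⟩ ≤ H` is cyclic of order `3` (identified with itself via the identity). -/
theorem stmt_15 :
    Nat.card (Subgroup.zpowers stG) = 3 ∧
    Nat.card (Subgroup.zpowers stH) = 3 ∧
    Nonempty (DoubleGroup ≃*
      Monoid.PushoutI (fun _ : Bool => (Subgroup.zpowers stH).subtype)) := by
  refine ⟨?_, ?_, ?_⟩
  · rw [Nat.card_zpowers, orderOf_stG]
  · rw [Nat.card_zpowers, orderOf_stH]
  · refine ⟨MonoidHom.toMulEquiv toPush fromPush ?_ ?_⟩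
    · -- fromPush ∘ toPush = id on DoubleGroup
      apply PresentedGroup.ext (rels := doubleRels)
      intro x
      show fromPush (toPush (PresentedGroup.of (rels := doubleRels) x))
          = PresentedGroup.of (rels := doubleRels) x
      rw [toPush_of]
      fin_cases x
      · rw [show tv ⟨0, by omega⟩ = tv 0 from rfl, tv0]; erw [fromPush_false, fstH_of]; rfl
      · rw [show tv ⟨1, by omega⟩ = tv 1 from rfl, tv1]; erw [fromPush_false, fstH_of]; rfl
      · rw [show tv ⟨2, by omega⟩ = tv 2 from rfl, tv2]; erw [fromPush_false, fstH_of]; rfl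
      · rw [show tv ⟨3, by omega⟩ = tv 3 from rfl, tv3]; erw [fromPush_true, sndH_of]; rfl
      · rw [show tv ⟨4, by omega⟩ = tv 4 from rfl, tv4]; erw [fromPush_true, sndH_of]; rfl
      · rw [show tv ⟨5, by omega⟩ = tv 5 from rfl, tv5]; erw [fromPush_true, sndH_of]; rfl
    · -- toPush ∘ fromPush = id on the pushout
      apply Monoid.PushoutI.hom_ext_nonempty
      intro i
      apply PresentedGroup.ext (rels := triRels)
      intro x
      cases i
      · show toPush (fromPush
            (Monoid.PushoutI.of (φ := fun _ : Bool => (Subgroup.zpowers stH).subtype) false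
              (PresentedGroup.of (rels := triRels) x)))
          = Monoid.PushoutI.of (φ := fun _ : Bool => (Subgroup.zpowers stH).subtype) false
              (PresentedGroup.of (rels := triRels) x)
        erw [fromPush_false, fstH_of, toPush_of]
        fin_cases x <;> rfl
      · show toPush (fromPush
            (Monoid.PushoutI.of (φ := fun _ : Bool => (Subgroup.zpowers stH).subtype) true
              (PresentedGroup.of (rels := triRels) x)))
          = Monoid.PushoutI.of (φ := fun _ : Bool => (Subgroup.zpowers stH).subtype) true
              (PresentedGroup.of (rels := triRels) x)
        erw [fromPush_true, sndH_of, toPush_of]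
        fin_cases x <;> rfl
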